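/- arXiv:2604.01510 — 2 statements merged into one kernel-verified Lean document; each statement's English description precedes it below -/
import Mathlib

section
/- (Small pairwise facet intersections force ℤ₂-index at most 1.) Let A : Fin M → Fin N → ℤ be a partial sign matrix such that for all distinct rows i ≠ i' and each ε ∈ {1, −1}, the set {j : A i j ≠ 0 ∧ A i' j ≠ 0 ∧ A i j = ε · A i' j} has at most one element (equivalently, every pair of facets of the sign complex S(A) intersects in at most one vertex). Then there exists a continuous map f : |S(A)| → ℝ² such that f(x) ≠ 0 for all x ∈ |S(A)| and f(−x) = −f(x) whenever x and −x both lie in |S(A)|; i.e., ind_{ℤ₂}(S(A)) ≤ 1. -/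
open scoped Pointwise

/-- The realized simplex of row `i` of the partial sign matrix `A`. -/
noncomputable def rowSimplex {M N : ℕ} (A : Fin M → Fin N → ℤ) (i : Fin M) :
    Set (Fin N → ℝ) :=
  convexHull ℝ
    ({x | ∃ j, A i j = 1 ∧ x = Pi.single j (1 : ℝ)} ∪
     {x | ∃ j, A i j = -1 ∧ x = -Pi.single j (1 : ℝ)})

/-- The crosspolytope realization `|S(A)|` of the sign complex of `A`. -/
noncomputable def signComplexReal {M N : ℕ} (A : Fin M → Fin N → ℤ) :
    Set (Fin N → ℝ) :=
  ⋃ i, (rowSimplex A i ∪ -(rowSimplex A i))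

noncomputable def gg (t : ℝ) : ℝ := max (2 * t - 1) 0 - max (-(2 * t) - 1) 0
noncomputable def aa (t : ℝ) : ℝ := max (2 * t - 1) 0 + max (-(2 * t) - 1) 0

lemma gg_neg (t : ℝ) : gg (-t) = - gg t := by
  have h1 : 2 * (-t) - 1 = -(2 * t) - 1 := by ring
  have h2 : -(2 * (-t)) - 1 = 2 * t - 1 := by ring
  simp only [gg, h1, h2]; ring

lemma aa_neg (t : ℝ) : aa (-t) = aa t := by
  have h1 : 2 * (-t) - 1 = -(2 * t) - 1 := by ring
  have h2 : -(2 * (-t)) - 1 = 2 * t - 1 := by ring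
  simp only [aa, h1, h2]; ring

lemma gg_cont : Continuous gg := by unfold gg; fun_prop
lemma aa_cont : Continuous aa := by unfold aa; fun_prop

lemma aa_eq_zero {t : ℝ} (h : 2 * |t| ≤ 1) : aa t = 0 := by
  rcases abs_le.mp (by linarith : |t| ≤ 1/2) with ⟨h1, h2⟩
  simp only [aa, max_eq_right (by linarith : 2*t - 1 ≤ 0),
    max_eq_right (by linarith : -(2*t) - 1 ≤ 0)]
  ring

lemma gg_eq_zero {t : ℝ} (h : 2 * |t| ≤ 1) : gg t = 0 := by
  rcases abs_le.mp (by linarith : |t| ≤ 1/2) with ⟨h1, h2⟩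
  simp only [gg, max_eq_right (by linarith : 2*t - 1 ≤ 0),
    max_eq_right (by linarith : -(2*t) - 1 ≤ 0)]
  ring

lemma abs_big_of_aa_ne {t : ℝ} (h : aa t ≠ 0) : 1 < 2 * |t| := by
  by_contra hc
  exact h (aa_eq_zero (not_lt.mp hc))

lemma aa_eq_zero_of_gg {t : ℝ} (h : gg t = 0) : aa t = 0 := by
  rcases le_or_gt (2 * |t|) 1 with h1 | h1
  · exact aa_eq_zero h1
  rcases lt_abs.mp (by linarith : 1/2 < |t|) with h2 | h2
  · exfalso
    rw [gg, max_eq_left (by linarith : (0:ℝ) ≤ 2*t - 1),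
      max_eq_right (by linarith : -(2*t) - 1 ≤ 0)] at h
    linarith
  · exfalso
    rw [gg, max_eq_right (by linarith : 2*t - 1 ≤ 0),
      max_eq_left (by linarith : (0:ℝ) ≤ -(2*t) - 1)] at h
    linarith

lemma aa_of_abs_one {t : ℝ} (h : |t| = 1) : aa t = 1 := by
  rcases abs_eq (by norm_num : (0:ℝ) ≤ 1) |>.mp h with rfl | rfl <;> norm_num [aa]

lemma rowSimplex_mem {M N : ℕ} (A : Fin M → Fin N → ℤ) {i : Fin M} {x : Fin N → ℝ}
    (hx : x ∈ rowSimplex A i) :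
    (∀ j, (A i j = 1 → 0 ≤ x j) ∧ (A i j = -1 → x j ≤ 0) ∧ (A i j = 0 → x j = 0)) ∧
    ∑ j, (A i j : ℝ) * x j = 1 := by
  set C : Set (Fin N → ℝ) := {y |
    (∀ j, (A i j = 1 → 0 ≤ y j) ∧ (A i j = -1 → y j ≤ 0) ∧ (A i j = 0 → y j = 0)) ∧
    ∑ j, (A i j : ℝ) * y j = 1} with hC
  have hconv : Convex ℝ C := by
    intro y hy z hz a b ha hb hab
    obtain ⟨hy1, hy2⟩ := hy
    obtain ⟨hz1, hz2⟩ := hz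
    constructor
    · intro j
      have e : (a • y + b • z) j = a * y j + b * z j := by
        simp [Pi.add_apply, Pi.smul_apply, smul_eq_mul]
      refine ⟨?_, ?_, ?_⟩ <;> intro hj <;> rw [e]
      · have h1 := (hy1 j).1 hj
        have h2 := (hz1 j).1 hj
        have := mul_nonneg ha h1
        have := mul_nonneg hb h2
        linarith
      · have h1 := (hy1 j).2.1 hj
        have h2 := (hz1 j).2.1 hj
        have := mul_nonpos_of_nonneg_of_nonpos ha h1
        have := mul_nonpos_of_nonneg_of_nonpos hb h2
        linarith
      · rw [(hy1 j).2.2 hj, (hz1 j).2.2 hj]; ring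
    · have : ∑ j, (A i j : ℝ) * (a • y + b • z) j
          = ∑ j, (a * ((A i j : ℝ) * y j) + b * ((A i j : ℝ) * z j)) := by
        apply Finset.sum_congr rfl
        intro j _
        simp [Pi.add_apply, Pi.smul_apply, smul_eq_mul]
        ring
      rw [this, Finset.sum_add_distrib, ← Finset.mul_sum, ← Finset.mul_sum, hy2, hz2]
      linarith
  have hsub : ({x | ∃ j, A i j = 1 ∧ x = Pi.single j (1 : ℝ)} ∪
      {x | ∃ j, A i j = -1 ∧ x = -Pi.single j (1 : ℝ)}) ⊆ C := by
    rintro v (⟨j, hj, rfl⟩ | ⟨j, hj, rfl⟩)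
    · constructor
      · intro k
        refine ⟨?_, ?_, ?_⟩ <;> intro hk
        · rcases eq_or_ne k j with rfl | hne
          · simp
          · simp [Pi.single_eq_of_ne hne]
        · rcases eq_or_ne k j with rfl | hne
          · rw [hj] at hk; norm_num at hk
          · simp [Pi.single_eq_of_ne hne]
        · rcases eq_or_ne k j with rfl | hne
          · rw [hj] at hk; norm_num at hk
          · simp [Pi.single_eq_of_ne hne]
      · rw [Finset.sum_eq_single j]
        · simp [hj]
        · intro k _ hk; simp [Pi.single_eq_of_ne hk]
        · intro h; exact absurd (Finset.mem_univ j) h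
    · constructor
      · intro k
        refine ⟨?_, ?_, ?_⟩ <;> intro hk
        · rcases eq_or_ne k j with rfl | hne
          · rw [hj] at hk; norm_num at hk
          · simp [Pi.single_eq_of_ne hne]
        · rcases eq_or_ne k j with rfl | hne
          · simp
          · simp [Pi.single_eq_of_ne hne]
        · rcases eq_or_ne k j with rfl | hne
          · rw [hj] at hk; norm_num at hk
          · simp [Pi.single_eq_of_ne hne]
      · rw [Finset.sum_eq_single j]
        · simp [hj]
        · intro k _ hk; simp [Pi.single_eq_of_ne hk]
        · intro h; exact absurd (Finset.mem_univ j) h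
  exact convexHull_min hsub hconv hx

lemma rowSimplex_sum_abs {M N : ℕ} {A : Fin M → Fin N → ℤ}
    (hA : ∀ i j, A i j = -1 ∨ A i j = 0 ∨ A i j = 1) {i : Fin M} {x : Fin N → ℝ}
    (hx : x ∈ rowSimplex A i) : ∑ j, |x j| = 1 := by
  obtain ⟨hsign, hsum⟩ := rowSimplex_mem A hx
  rw [← hsum]
  apply Finset.sum_congr rfl
  intro j _
  rcases hA i j with h | h | h
  · rw [h, abs_of_nonpos ((hsign j).2.1 h)]; push_cast; ring
  · rw [h, (hsign j).2.2 h]; norm_num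
  · rw [h, abs_of_nonneg ((hsign j).1 h)]; push_cast; ring

lemma key_lemma {M N : ℕ} {A : Fin M → Fin N → ℤ}
    (hA : ∀ i j, A i j = -1 ∨ A i j = 0 ∨ A i j = 1)
    (hfacet : ∀ i i' : Fin M, i ≠ i' → ∀ ε : ℤ, ε = 1 ∨ ε = -1 →
      {j | A i j ≠ 0 ∧ A i' j ≠ 0 ∧ A i j = ε * A i' j}.Subsingleton)
    {i i' : Fin M} {x : Fin N → ℝ}
    (hx : x ∈ rowSimplex A i) (hx' : -x ∈ rowSimplex A i') :
    ∑ j, aa (x j) = 1 := by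
  obtain ⟨hsign, hsum⟩ := rowSimplex_mem A hx
  obtain ⟨hsign', hsum'⟩ := rowSimplex_mem A hx'
  rcases eq_or_ne i i' with rfl | hne
  · exfalso
    have : ∑ j, (A i j : ℝ) * (-x) j = - ∑ j, (A i j : ℝ) * x j := by
      rw [← Finset.sum_neg_distrib]
      apply Finset.sum_congr rfl
      intro j _; simp [Pi.neg_apply]
    rw [this, hsum] at hsum'
    linarith
  · have hT := hfacet i i' hne (-1) (Or.inr rfl)
    have habs : ∑ j, |x j| = 1 := rowSimplex_sum_abs hA hx
    have hmem : ∀ j, x j ≠ 0 → j ∈ {j | A i j ≠ 0 ∧ A i' j ≠ 0 ∧ A i j = -1 * A i' j} := by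
      intro j hj
      have h0 : A i j ≠ 0 := by
        intro h; exact hj ((hsign j).2.2 h)
      have h0' : A i' j ≠ 0 := by
        intro h
        have := (hsign' j).2.2 h
        simp only [Pi.neg_apply, neg_eq_zero] at this
        exact hj this
      refine ⟨h0, h0', ?_⟩
      rcases lt_or_gt_of_ne hj with hlt | hgt
      · -- x j < 0 : A i j = -1, (-x) j > 0 : A i' j = 1
        have hAi : A i j = -1 := by
          rcases hA i j with h | h | h
          · exact h
          · exact absurd h h0
          · exact absurd (le_antisymm (le_of_lt hlt) ((hsign j).1 h)) hj
        have hAi' : A i' j = 1 := by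
          rcases hA i' j with h | h | h
          · have := (hsign' j).2.1 h
            simp only [Pi.neg_apply] at this
            linarith
          · exact absurd h h0'
          · exact h
        rw [hAi, hAi']; ring
      · have hAi : A i j = 1 := by
          rcases hA i j with h | h | h
          · exact absurd (le_antisymm ((hsign j).2.1 h) (le_of_lt hgt)) hj
          · exact absurd h h0
          · exact h
        have hAi' : A i' j = -1 := by
          rcases hA i' j with h | h | h
          · exact h
          · exact absurd h h0'
          · have := (hsign' j).1 h
            simp only [Pi.neg_apply] at this
            linarith
        rw [hAi, hAi']; ring
    have hex : ∃ j, x j ≠ 0 := by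
      by_contra h
      push_neg at h
      rw [Finset.sum_congr rfl (fun j _ => by rw [h j, abs_zero])] at habs
      simp at habs
    obtain ⟨j₀, hj₀⟩ := hex
    have hzero : ∀ k, k ≠ j₀ → x k = 0 := by
      intro k hk
      by_contra hkk
      exact hk (hT (hmem k hkk) (hmem j₀ hj₀))
    have habs0 : |x j₀| = 1 := by
      rw [Finset.sum_eq_single j₀ (fun k _ hk => by rw [hzero k hk, abs_zero])
        (fun h => absurd (Finset.mem_univ j₀) h)] at habs
      exact habs
    rw [Finset.sum_eq_single j₀ (fun k _ hk => by
        rw [hzero k hk]; exact aa_eq_zero (by norm_num))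
      (fun h => absurd (Finset.mem_univ j₀) h)]
    exact aa_of_abs_one habs0

lemma no_zero {N : ℕ} (x : Fin N → ℝ) (hsum : ∑ j, |x j| = 1)
    (hS : ∑ j, gg (x j) = 0) (hμ : ∑ j, aa (x j) = 1) : False := by
  have hex : ∃ j, aa (x j) ≠ 0 := by
    by_contra h
    push_neg at h
    rw [Finset.sum_congr rfl (fun j _ => h j)] at hμ
    simp at hμ
  obtain ⟨j, hj⟩ := hex
  have hbig := abs_big_of_aa_ne hj
  have hsmall : ∀ k, k ≠ j → 2 * |x k| ≤ 1 := by
    intro k hk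
    have hle : |x j| + |x k| ≤ ∑ m, |x m| := by
      have : ∑ m ∈ ({j, k} : Finset (Fin N)), |x m| ≤ ∑ m, |x m| :=
        Finset.sum_le_sum_of_subset_of_nonneg (Finset.subset_univ _)
          (fun m _ _ => abs_nonneg _)
      rwa [Finset.sum_pair (Ne.symm hk)] at this
    rw [hsum] at hle
    linarith
  have hgj : gg (x j) = 0 := by
    rw [Finset.sum_eq_single j (fun k _ hk => gg_eq_zero (hsmall k hk))
      (fun h => absurd (Finset.mem_univ j) h)] at hS
    exact hS
  exact hj (aa_eq_zero_of_gg hgj)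

/-- Small pairwise facet intersections force ℤ₂-index at most 1: if any two
distinct rows of `A` agree (up to a global sign `ε`) on at most one commonly
specified column — i.e. every pair of facets of `S(A)` meets in at most one
vertex — then there is a ℤ₂-equivariant continuous map `|S(A)| → ℝ² \ {0}`,
so `ind_{ℤ₂}(S(A)) ≤ 1`. -/
theorem facet_intersection_index_le_one {M N : ℕ} (A : Fin M → Fin N → ℤ)
    (hA : ∀ i j, A i j = -1 ∨ A i j = 0 ∨ A i j = 1)
    (hfacet : ∀ i i' : Fin M, i ≠ i' → ∀ ε : ℤ, ε = 1 ∨ ε = -1 →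
      {j | A i j ≠ 0 ∧ A i' j ≠ 0 ∧ A i j = ε * A i' j}.Subsingleton) :
    ∃ f : (Fin N → ℝ) → (Fin 2 → ℝ),
      ContinuousOn f (signComplexReal A) ∧
      (∀ x ∈ signComplexReal A, f x ≠ 0) ∧
      (∀ x, x ∈ signComplexReal A → -x ∈ signComplexReal A → f (-x) = -f x) := by
  classical
  set P : Set (Fin N → ℝ) := ⋃ i, rowSimplex A i with hPdef
  have hPc : IsClosed P := by
    apply isClosed_iUnion_of_finite
    intro i
    apply IsCompact.isClosed; apply Set.Finite.isCompact_convexHull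
    apply Set.Finite.union
    · apply Set.Finite.subset (Set.finite_range (fun j : Fin N => Pi.single j (1:ℝ)))
      rintro x ⟨j, _, rfl⟩; exact ⟨j, rfl⟩
    · apply Set.Finite.subset (Set.finite_range (fun j : Fin N => -Pi.single j (1:ℝ)))
      rintro x ⟨j, _, rfl⟩; exact ⟨j, rfl⟩
  have hP'c : IsClosed (-P) := hPc.neg
  set S : (Fin N → ℝ) → ℝ := fun x => ∑ j, gg (x j) with hSdef
  set Mu : (Fin N → ℝ) → ℝ := fun x => ∑ j, aa (x j) with hMudef
  have hSneg : ∀ x, S (-x) = -S x := by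
    intro x
    simp [hSdef, Pi.neg_apply, gg_neg, Finset.sum_neg_distrib]
  have hMuneg : ∀ x, Mu (-x) = Mu x := by
    intro x
    simp [hMudef, Pi.neg_apply, aa_neg]
  have hScont : Continuous S :=
    continuous_finset_sum _ fun j _ => gg_cont.comp (continuous_apply j)
  have hMucont : Continuous Mu :=
    continuous_finset_sum _ fun j _ => aa_cont.comp (continuous_apply j)
  have hXsub : signComplexReal A ⊆ P ∪ (-P) := by
    intro x hx
    simp only [signComplexReal, Set.mem_iUnion, Set.mem_union] at hx
    obtain ⟨i, hx | hx⟩ := hx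
    · exact Or.inl (Set.mem_iUnion.mpr ⟨i, hx⟩)
    · exact Or.inr (Set.mem_neg.mpr (Set.mem_iUnion.mpr ⟨i, Set.mem_neg.mp hx⟩))
  have hkey : ∀ x, x ∈ P → -x ∈ P → Mu x = 1 := by
    intro x hx hx'
    obtain ⟨i, hxi⟩ := Set.mem_iUnion.mp hx
    obtain ⟨i', hxi'⟩ := Set.mem_iUnion.mp hx'
    exact key_lemma hA hfacet hxi hxi'
  have habsP : ∀ x, x ∈ P ∪ (-P) → ∑ j, |x j| = 1 := by
    intro x hx
    rcases hx with hx | hx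
    · obtain ⟨i, hxi⟩ := Set.mem_iUnion.mp hx
      exact rowSimplex_sum_abs hA hxi
    · obtain ⟨i, hxi⟩ := Set.mem_iUnion.mp (Set.mem_neg.mp hx)
      have := rowSimplex_sum_abs hA hxi
      simpa [Pi.neg_apply, abs_neg] using this
  have hfp : Continuous (fun y => ![S y, 1 - Mu y]) := by
    apply continuous_pi
    intro k
    fin_cases k
    · simpa using hScont
    · have h : Continuous fun y => 1 - Mu y := continuous_const.sub hMucont; simpa using h
  have hfm : Continuous (fun y => ![S y, Mu y - 1]) := by
    apply continuous_pi
    intro k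
    fin_cases k
    · simpa using hScont
    · have h : Continuous fun y => Mu y - 1 := hMucont.sub continuous_const; simpa using h
  refine ⟨fun x => if x ∈ P then ![S x, 1 - Mu x] else ![S x, Mu x - 1], ?_, ?_, ?_⟩
  · intro x hx
    apply ContinuousWithinAt.mono ?_ hXsub
    apply ContinuousWithinAt.union
    · by_cases hxP : x ∈ P
      · apply (hfp.continuousWithinAt).congr
        · intro y hy; simp only [if_pos hy]
        · simp only [if_pos hxP]
      · exact continuousWithinAt_of_notMem_closure (by rwa [hPc.closure_eq])
    · by_cases hxP' : x ∈ -P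
      · apply (hfm.continuousWithinAt).congr
        · intro y hy
          by_cases hyP : y ∈ P
          · have hMu1 : Mu y = 1 := hkey y hyP (Set.mem_neg.mp hy)
            simp only [if_pos hyP, hMu1]
          · simp only [if_neg hyP]
        · by_cases hxP : x ∈ P
          · have hMu1 : Mu x = 1 := hkey x hxP (Set.mem_neg.mp hxP')
            simp only [if_pos hxP, hMu1]
          · simp only [if_neg hxP]
      · exact continuousWithinAt_of_notMem_closure (by rwa [hP'c.closure_eq])
  · intro x hx h0
    have hsum1 := habsP x (hXsub hx)
    by_cases hxP : x ∈ P
    · simp only [if_pos hxP] at h0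
      have h1 : S x = 0 := by simpa using congrFun h0 0
      have h2 : 1 - Mu x = 0 := by simpa using congrFun h0 1
      exact no_zero x hsum1 h1 (by linarith)
    · simp only [if_neg hxP] at h0
      have h1 : S x = 0 := by simpa using congrFun h0 0
      have h2 : Mu x - 1 = 0 := by simpa using congrFun h0 1
      exact no_zero x hsum1 h1 (by linarith)
  · intro x hx hnegx
    have hx2 := hXsub hx
    by_cases hxP : x ∈ P
    · by_cases hnxP : -x ∈ P
      · have hMu1 := hkey x hxP hnxP
        have hMu2 := hkey (-x) hnxP (by rwa [neg_neg])
        simp only [if_pos hxP, if_pos hnxP, hSneg, hMu1, hMu2]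
        funext k; fin_cases k <;>
          simp [Matrix.cons_val_zero, Matrix.cons_val_one, Matrix.head_cons, Pi.neg_apply]
      · simp only [if_pos hxP, if_neg hnxP, hSneg, hMuneg]
        funext k; fin_cases k <;>
          · simp [Matrix.cons_val_zero, Matrix.cons_val_one, Matrix.head_cons, Pi.neg_apply]
            try ring
    · have hxP' : x ∈ -P := hx2.resolve_left hxP
      have hnxP : -x ∈ P := Set.mem_neg.mp hxP'
      simp only [if_neg hxP, if_pos hnxP, hSneg, hMuneg]
      funext k; fin_cases k <;>
        · simp [Matrix.cons_val_zero, Matrix.cons_val_one, Matrix.head_cons, Pi.neg_apply]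
          try ring
end

section
/- (Nerve of the facet cover equals the sign complex of the transpose.) Let A : Fin M → Fin N → ℤ be a partial sign matrix and let R, T ⊆ Fin M be disjoint finsets of rows with R ∪ T nonempty. Then the intersection (⋂_{i ∈ R} σ_i) ∩ (⋂_{j ∈ T} (−σ_j)) of the realized row simplices is nonempty if and only if there exist a column c ∈ Fin N and a sign ε ∈ {1, −1} such that A i c = ε for all i ∈ R and A j c = −ε for all j ∈ T. (This is the face characterization showing that the nerve of the cover of S(A) by the facets K_i^± is isomorphic to S(Aᵀ).) -/
open scoped Pointwise

private lemma sum_mul_single_aux {N : ℕ} (a : Fin N → ℤ) (j : Fin N) :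
    ∑ k, (a k : ℝ) * Pi.single (M := fun _ => ℝ) j 1 k = (a j : ℝ) := by
  rw [Finset.sum_eq_single j]
  · simp
  · intro k _ hk; simp [Pi.single_apply, hk]
  · simp

lemma rowSimplex_pos {M N : ℕ} (A : Fin M → Fin N → ℤ) (i : Fin M) {x : Fin N → ℝ}
    (hx : x ∈ rowSimplex A i) {c : Fin N} (hc : 0 < x c) : A i c = 1 := by
  by_contra h
  have hlin : IsLinearMap ℝ (fun y : Fin N → ℝ => y c) := ⟨fun a b => rfl, fun r a => rfl⟩
  have hsub : rowSimplex A i ⊆ {y : Fin N → ℝ | y c ≤ 0} := by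
    apply convexHull_min _ (convex_halfSpace_le hlin 0)
    rintro y (⟨j, hj, rfl⟩ | ⟨j, hj, rfl⟩)
    · rcases eq_or_ne c j with rfl | hjc
      · exact absurd hj h
      · simp [Pi.single_apply, hjc]
    · simp only [Pi.neg_apply, Pi.single_apply, Set.mem_setOf_eq]
      split <;> norm_num
  exact absurd (hsub hx) (by simpa using hc)

lemma rowSimplex_neg {M N : ℕ} (A : Fin M → Fin N → ℤ) (i : Fin M) {x : Fin N → ℝ}
    (hx : x ∈ rowSimplex A i) {c : Fin N} (hc : x c < 0) : A i c = -1 := by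
  by_contra h
  have hlin : IsLinearMap ℝ (fun y : Fin N → ℝ => y c) := ⟨fun a b => rfl, fun r a => rfl⟩
  have hsub : rowSimplex A i ⊆ {y : Fin N → ℝ | 0 ≤ y c} := by
    apply convexHull_min _ (convex_halfSpace_ge hlin 0)
    rintro y (⟨j, hj, rfl⟩ | ⟨j, hj, rfl⟩)
    · simp only [Pi.single_apply, Set.mem_setOf_eq]
      split <;> norm_num
    · rcases eq_or_ne c j with rfl | hjc
      · exact absurd hj h
      · simp [Pi.single_apply, hjc]
  exact absurd (hsub hx) (by simpa using hc)

lemma rowSimplex_ne_zero {M N : ℕ} (A : Fin M → Fin N → ℤ) (i : Fin M) {x : Fin N → ℝ}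
    (hx : x ∈ rowSimplex A i) : x ≠ 0 := by
  have hlin : IsLinearMap ℝ (fun y : Fin N → ℝ => ∑ k, (A i k : ℝ) * y k) := by
    constructor
    · intro a b; simp [mul_add, Finset.sum_add_distrib]
    · intro r a; simp [Finset.mul_sum, mul_left_comm]
  have hsub : rowSimplex A i ⊆ {y : Fin N → ℝ | ∑ k, (A i k : ℝ) * y k = 1} := by
    apply convexHull_min _ (convex_hyperplane hlin 1)
    rintro y (⟨j, hj, rfl⟩ | ⟨j, hj, rfl⟩)
    · simp only [Set.mem_setOf_eq, sum_mul_single_aux, hj]; norm_num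
    · simp only [Set.mem_setOf_eq, Pi.neg_apply, mul_neg, Finset.sum_neg_distrib,
        sum_mul_single_aux, hj]
      norm_num
  intro h0
  have := hsub hx
  rw [h0] at this
  simp at this

/-- Nerve of the facet cover equals the sign complex of the transpose
(face characterization): for disjoint sets of rows `R, T` with `R ∪ T`
nonempty, the intersection `(⋂_{i∈R} σ_i) ∩ (⋂_{j∈T} (-σ_j))` is nonempty iff
some column `c` and sign `ε ∈ {1,-1}` satisfy `A i c = ε` for all `i ∈ R` and
`A j c = -ε` for all `j ∈ T`. -/
theorem nerve_eq_transpose {M N : ℕ} (A : Fin M → Fin N → ℤ)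
    (hA : ∀ i j, A i j = -1 ∨ A i j = 0 ∨ A i j = 1)
    (R T : Finset (Fin M)) (hdisj : Disjoint R T) (hne : (R ∪ T).Nonempty) :
    ((⋂ i ∈ R, rowSimplex A i) ∩ ⋂ j ∈ T, -(rowSimplex A j)).Nonempty ↔
      ∃ (c : Fin N) (ε : ℤ), (ε = 1 ∨ ε = -1) ∧
        (∀ i ∈ R, A i c = ε) ∧ (∀ j ∈ T, A j c = -ε) := by
  constructor
  · rintro ⟨x, hxR, hxT⟩
    simp only [Set.mem_iInter] at hxR hxT
    -- x is nonzero
    have hxne : x ≠ 0 := by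
      obtain ⟨i0, hi0⟩ := hne
      rcases Finset.mem_union.mp hi0 with h | h
      · exact rowSimplex_ne_zero A i0 (hxR i0 h)
      · have := rowSimplex_ne_zero A i0 (Set.mem_neg.mp (hxT i0 h))
        intro h0; apply this; rw [h0]; simp
    obtain ⟨c, hc⟩ := Function.ne_iff.mp hxne
    simp only [Pi.zero_apply] at hc
    rcases lt_or_gt_of_ne hc with hneg | hpos
    · refine ⟨c, -1, Or.inr rfl, ?_, ?_⟩
      · intro i hi; exact rowSimplex_neg A i (hxR i hi) hneg
      · intro j hj
        have h' : -x ∈ rowSimplex A j := Set.mem_neg.mp (hxT j hj)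
        have : (0:ℝ) < (-x) c := by simpa using hneg
        simpa using rowSimplex_pos A j h' this
    · refine ⟨c, 1, Or.inl rfl, ?_, ?_⟩
      · intro i hi; exact rowSimplex_pos A i (hxR i hi) hpos
      · intro j hj
        have h' : -x ∈ rowSimplex A j := Set.mem_neg.mp (hxT j hj)
        have : (-x) c < 0 := by simpa using hpos
        exact rowSimplex_neg A j h' this
  · rintro ⟨c, ε, (rfl | rfl), hR, hT⟩
    · refine ⟨Pi.single c (1:ℝ), ?_⟩
      constructor
      · simp only [Set.mem_iInter]
        intro i hi
        exact subset_convexHull ℝ _ (Or.inl ⟨c, hR i hi, rfl⟩)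
      · simp only [Set.mem_iInter]
        intro j hj
        refine Set.mem_neg.mpr ?_
        exact subset_convexHull ℝ _ (Or.inr ⟨c, hT j hj, rfl⟩)
    · refine ⟨-Pi.single c (1:ℝ), ?_⟩
      constructor
      · simp only [Set.mem_iInter]
        intro i hi
        exact subset_convexHull ℝ _ (Or.inr ⟨c, hR i hi, rfl⟩)
      · simp only [Set.mem_iInter]
        intro j hj
        refine Set.mem_neg.mpr ?_
        have h1 : A j c = 1 := by have := hT j hj; omega
        have heq : -(-Pi.single c (1:ℝ)) = (Pi.single c (1:ℝ) : Fin N → ℝ) := by simp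
        rw [heq]
        exact subset_convexHull ℝ _ (Or.inl ⟨c, h1, rfl⟩)
end
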